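/- Let X = ℝ \ {0}, let u₁(x) = x and u₂(x) = 1/x, and define x ≼ y iff u₁(x) ≤ u₁(y) and u₂(x) ≤ u₂(y). Then ≼ is a partial order on X, the pair (u₁, u₂) is a strict monotone multi-utility for (X,≼), and: every Debreu dense subset of (X,≼) is uncountable, and every Debreu upper dense subset of (X,≼) is uncountable. In particular, there exist preorders with a finite strict monotone multi-utility that are neither Debreu separable nor Debreu upper separable. -/
import Mathlib


/-- A binary relation is a partial order: reflexive, antisymmetric, transitive. -/
def IsPartialOrderRel {X : Type*} (r : X → X → Prop) : Prop :=
  (∀ x, r x x) ∧ (∀ x y, r x y → r y x → x = y) ∧ (∀ x y z, r x y → r y z → r x z)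

/-- `r'` extends `r`. -/
def RelExtends {X : Type*} (r r' : X → X → Prop) : Prop :=
  ∀ x y, r x y → r' x y

/-- `r` is total: any two elements are comparable. -/
def TotalRel {X : Type*} (r : X → X → Prop) : Prop :=
  ∀ x y, r x y ∨ r y x

/-- `r'` is a linear extension of `r`: a total partial order extending `r`. -/
def IsLinearExtension {X : Type*} (r r' : X → X → Prop) : Prop :=
  IsPartialOrderRel r' ∧ TotalRel r' ∧ RelExtends r r'

/-- `x` and `y` are incomparable with respect to `r`. -/
def Incomp {X : Type*} (r : X → X → Prop) (x y : X) : Prop :=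
  ¬ r x y ∧ ¬ r y x

/-- `D` is Debreu dense for `r`. -/
def DebreuDense {X : Type*} (r : X → X → Prop) (D : Set X) : Prop :=
  ∀ x y, r x y → ¬ r y x → ∃ d ∈ D, r x d ∧ r d y

/-- `(X, r)` is Debreu separable: it has a countable Debreu dense subset. -/
def DebreuSeparable {X : Type*} (r : X → X → Prop) : Prop :=
  ∃ D : Set X, D.Countable ∧ DebreuDense r D

/-- The limit of a sequence of binary relations. -/
def LimitRel {X : Type*} (r : ℕ → X → X → Prop) : X → X → Prop :=
  fun x y => ∃ n₀ : ℕ, ∀ n, n₀ ≤ n → r n x y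

/-- `D` is Debreu upper dense for `r`. -/
def DebreuUpperDense {X : Type*} (r : X → X → Prop) (D : Set X) : Prop :=
  ∀ x y, Incomp r x y → ∃ d ∈ D, Incomp r x d ∧ r d y

/-- The ground set `ℝ \ {0}`. -/
abbrev NzReal : Type := {x : ℝ // x ≠ 0}

/-- First utility: the identity. -/
def uId : NzReal → ℝ := fun x => x.1

/-- Second utility: the reciprocal. -/
noncomputable def uInv : NzReal → ℝ := fun x => 1 / x.1

/-- The partial order of Proposition 6. -/
noncomputable def rInv : NzReal → NzReal → Prop := fun x y =>
  uId x ≤ uId y ∧ uInv x ≤ uInv y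


section helpers

lemma rInv_iff' (x y : NzReal) :
    rInv x y ↔ x = y ∨ (x.1 < 0 ∧ 0 < y.1) := by
  constructor
  · rintro ⟨h1, h2⟩
    simp only [uId, uInv] at h1 h2
    rcases lt_or_gt_of_ne x.2 with hx | hx
    · rcases lt_or_gt_of_ne y.2 with hy | hy
      · left
        have : y.1 ≤ x.1 := (one_div_le_one_div_of_neg hx hy).mp h2
        exact Subtype.ext (le_antisymm h1 this)
      · exact Or.inr ⟨hx, hy⟩
    · have hy : 0 < y.1 := lt_of_lt_of_le hx h1
      left
      have : y.1 ≤ x.1 := (one_div_le_one_div hx hy).mp h2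
      exact Subtype.ext (le_antisymm h1 this)
  · rintro (rfl | ⟨hx, hy⟩)
    · exact ⟨le_rfl, le_rfl⟩
    · refine ⟨le_of_lt (hx.trans hy), ?_⟩
      simp only [uInv]
      have h1 : 1 / x.1 < 0 := one_div_neg.mpr hx
      have h2 : 0 < 1 / y.1 := one_div_pos.mpr hy
      linarith

lemma not_countable_neg : ¬ ({x : NzReal | x.1 < 0}).Countable := by
  intro h
  have himg : (Subtype.val '' {x : NzReal | x.1 < 0}) = Set.Iio (0:ℝ) := by
    ext r
    simp only [Set.mem_image, Set.mem_setOf_eq, Set.mem_Iio]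
    constructor
    · rintro ⟨x, hx, rfl⟩; exact hx
    · intro hr; exact ⟨⟨r, ne_of_lt hr⟩, hr, rfl⟩
  have hc : (Set.Iio (0:ℝ)).Countable := himg ▸ h.image _
  have := hc.le_aleph0
  rw [Cardinal.mk_Iio_real] at this
  exact absurd this (not_le.mpr Cardinal.aleph0_lt_continuum)

lemma not_countable_pos : ¬ ({x : NzReal | 0 < x.1}).Countable := by
  intro h
  have himg : (Subtype.val '' {x : NzReal | 0 < x.1}) = Set.Ioi (0:ℝ) := by
    ext r
    simp only [Set.mem_image, Set.mem_setOf_eq, Set.mem_Ioi]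
    constructor
    · rintro ⟨x, hx, rfl⟩; exact hx
    · intro hr; exact ⟨⟨r, ne_of_gt hr⟩, hr, rfl⟩
  have hc : (Set.Ioi (0:ℝ)).Countable := himg ▸ h.image _
  have := hc.le_aleph0
  rw [Cardinal.mk_Ioi_real] at this
  exact absurd this (not_le.mpr Cardinal.aleph0_lt_continuum)

end helpers

theorem rInv_strictMonotoneMultiUtility_not_debreu_separable :
    IsPartialOrderRel rInv ∧
    (∀ x y, rInv x y ↔ (uId x ≤ uId y ∧ uInv x ≤ uInv y)) ∧
    (∀ x y, rInv x y → uId x ≤ uId y ∧ uInv x ≤ uInv y) ∧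
    (∀ x y, rInv x y → ¬ rInv y x → uId x < uId y ∧ uInv x < uInv y) ∧
    (∀ D : Set NzReal, DebreuDense rInv D → ¬ D.Countable) ∧
    (∀ D : Set NzReal, DebreuUpperDense rInv D → ¬ D.Countable) := by
  refine ⟨⟨?_, ?_, ?_⟩, ?_, ?_, ?_, ?_, ?_⟩
  · intro x; exact ⟨le_rfl, le_rfl⟩
  · intro x y hxy hyx
    rcases (rInv_iff' x y).mp hxy with rfl | ⟨hx, hy⟩
    · rfl
    · rcases (rInv_iff' y x).mp hyx with rfl | ⟨hy', hx'⟩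
      · rfl
      · linarith
  · intro x y z hxy hyz
    rcases (rInv_iff' x y).mp hxy with rfl | ⟨hx, hy⟩
    · exact hyz
    · rcases (rInv_iff' y z).mp hyz with rfl | ⟨hy', hz⟩
      · exact hxy
      · linarith
  · intro x y; exact Iff.rfl
  · intro x y h; exact h
  · intro x y hxy hyx
    rcases (rInv_iff' x y).mp hxy with rfl | ⟨hx, hy⟩
    · exact absurd hxy hyx
    · refine ⟨hx.trans hy, ?_⟩
      simp only [uInv]
      have h1 : 1 / x.1 < 0 := one_div_neg.mpr hx
      have h2 : 0 < 1 / y.1 := one_div_pos.mpr hy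
      linarith
  · -- Debreu dense
    intro D hD hc
    by_cases hneg : {x : NzReal | x.1 < 0} ⊆ D
    · exact not_countable_neg (hc.mono hneg)
    · rw [Set.not_subset] at hneg
      obtain ⟨x, hx, hxD⟩ := hneg
      simp only [Set.mem_setOf_eq] at hx
      have hpos : {y : NzReal | 0 < y.1} ⊆ D := by
        intro y hy
        simp only [Set.mem_setOf_eq] at hy
        have hxy : rInv x y := (rInv_iff' x y).mpr (Or.inr ⟨hx, hy⟩)
        have hyx : ¬ rInv y x := by
          intro h
          rcases (rInv_iff' y x).mp h with rfl | ⟨h1, h2⟩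
          · linarith
          · linarith
        obtain ⟨d, hdD, hxd, hdy⟩ := hD x y hxy hyx
        rcases (rInv_iff' x d).mp hxd with rfl | ⟨_, hd⟩
        · exact absurd hdD hxD
        · rcases (rInv_iff' d y).mp hdy with rfl | ⟨hd', _⟩
          · exact hdD
          · linarith
      exact not_countable_pos (hc.mono hpos)
  · -- Debreu upper dense
    intro D hD hc
    have hneg : {y : NzReal | y.1 < 0} ⊆ D := by
      intro y hy
      simp only [Set.mem_setOf_eq] at hy
      obtain ⟨x, hx, hxy⟩ : ∃ x : NzReal, x.1 < 0 ∧ x ≠ y := by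
        refine ⟨⟨y.1 - 1, by intro h; rw [sub_eq_zero] at h; linarith⟩, by
          show y.1 - 1 < 0; linarith, ?_⟩
        intro h
        have h2 : y.1 - 1 = y.1 := congrArg Subtype.val h
        linarith
      have hinc : Incomp rInv x y := by
        constructor
        · intro h
          rcases (rInv_iff' x y).mp h with rfl | ⟨_, h2⟩
          · exact hxy rfl
          · linarith
        · intro h
          rcases (rInv_iff' y x).mp h with rfl | ⟨_, h2⟩
          · exact hxy rfl
          · linarith
      obtain ⟨d, hdD, _, hdy⟩ := hD x y hinc
      rcases (rInv_iff' d y).mp hdy with rfl | ⟨_, h2⟩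
      · exact hdD
      · linarith
    exact not_countable_neg (hc.mono hneg)
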